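/- The Cayley-Dickson twist γ is proper with respect to the group operation bitwise XOR on ℕ: γ(p,q)γ(q,q) = γ(p XOR q, q) and γ(p,p)γ(p,q) = γ(p, p XOR q) for all p, q ∈ ℕ. -/

import Mathlib

/-- The Cayley-Dickson twist, defined recursively by γ(0,0) = 1,
γ(2p,2q) = γ(p,q), γ(2p+1,2q) = γ(q,p),
γ(2p,2q+1) = -γ(p,q) if p ≠ 0 and 1 if p = 0,
γ(2p+1,2q+1) = γ(q,p) if p ≠ 0 and -1 if p = 0. -/
def cdTwist (p q : ℕ) : ℤ :=
  if p = 0 ∧ q = 0 then 1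
  else if p % 2 = 0 then
    if q % 2 = 0 then cdTwist (p / 2) (q / 2)
    else if p / 2 = 0 then 1 else -cdTwist (p / 2) (q / 2)
  else
    if q % 2 = 0 then cdTwist (q / 2) (p / 2)
    else if p / 2 = 0 then -1 else cdTwist (q / 2) (p / 2)
termination_by p + q
decreasing_by all_goals omega

lemma xor_ee (a b : ℕ) : (2*a) ^^^ (2*b) = 2*(a^^^b) := by
  have := Nat.xor_bit false a false b
  simpa [Nat.bit] using this
lemma xor_oe (a b : ℕ) : (2*a+1) ^^^ (2*b) = 2*(a^^^b)+1 := by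
  have := Nat.xor_bit true a false b
  simpa [Nat.bit] using this
lemma xor_eo (a b : ℕ) : (2*a) ^^^ (2*b+1) = 2*(a^^^b)+1 := by
  have := Nat.xor_bit false a true b
  simpa [Nat.bit] using this
lemma xor_oo (a b : ℕ) : (2*a+1) ^^^ (2*b+1) = 2*(a^^^b) := by
  have := Nat.xor_bit true a true b
  simpa [Nat.bit] using this

lemma cd_ee (a b : ℕ) : cdTwist (2*a) (2*b) = cdTwist a b := by
  rw [cdTwist]
  by_cases h : a = 0 ∧ b = 0
  · obtain ⟨rfl, rfl⟩ := h; simp [cdTwist]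
  · have h1 : ¬(2*a = 0 ∧ 2*b = 0) := by omega
    simp [h1, Nat.mul_div_cancel_left, Nat.mul_mod_right]
    intro ha hb; exact absurd ⟨ha, hb⟩ h
lemma cd_oe (a b : ℕ) : cdTwist (2*a+1) (2*b) = cdTwist b a := by
  rw [cdTwist]
  have h1 : ¬(2*a+1 = 0 ∧ 2*b = 0) := by omega
  have h2 : (2*a+1) % 2 = 1 := by omega
  have h3 : (2*a+1) / 2 = a := by omega
  simp [h1, h2, h3, Nat.mul_mod_right, Nat.mul_div_cancel_left]
lemma cd_eo (a b : ℕ) : cdTwist (2*a) (2*b+1) = if a = 0 then 1 else -cdTwist a b := by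
  rw [cdTwist]
  have h1 : ¬(2*a = 0 ∧ 2*b+1 = 0) := by omega
  have h2 : (2*b+1) % 2 = 1 := by omega
  have h3 : (2*b+1) / 2 = b := by omega
  simp [h1, h2, h3, Nat.mul_mod_right, Nat.mul_div_cancel_left]
lemma cd_oo (a b : ℕ) : cdTwist (2*a+1) (2*b+1) = if a = 0 then -1 else cdTwist b a := by
  rw [cdTwist]
  have h1 : ¬(2*a+1 = 0 ∧ 2*b+1 = 0) := by omega
  have h2 : (2*a+1) % 2 = 1 := by omega
  have h3 : (2*a+1) / 2 = a := by omega
  have h4 : (2*b+1) % 2 = 1 := by omega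
  have h5 : (2*b+1) / 2 = b := by omega
  simp [h1, h2, h3, h4, h5]

lemma cd_zero_left : ∀ q, cdTwist 0 q = 1 := by
  intro q
  induction q using Nat.strong_induction_on with
  | _ q ih =>
    obtain ⟨b, hb | hb⟩ : ∃ b, q = 2*b ∨ q = 2*b+1 := ⟨q/2, by omega⟩
    · rcases Nat.eq_zero_or_pos b with rfl | hpos
      · simp [hb, cdTwist]
      · have h : cdTwist 0 (2*b) = cdTwist 0 b := by simpa using cd_ee 0 b
        rw [hb, h]; exact ih b (by omega)
    · have h : cdTwist 0 (2*b+1) = 1 := by simpa using cd_eo 0 b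
      rw [hb, h]

lemma cd_zero_right : ∀ p, cdTwist p 0 = 1 := by
  intro p
  induction p using Nat.strong_induction_on with
  | _ p ih =>
    obtain ⟨a, ha | ha⟩ : ∃ a, p = 2*a ∨ p = 2*a+1 := ⟨p/2, by omega⟩
    · rcases Nat.eq_zero_or_pos a with rfl | hpos
      · simp [ha, cdTwist]
      · have h : cdTwist (2*a) 0 = cdTwist a 0 := by simpa using cd_ee a 0
        rw [ha, h]; exact ih a (by omega)
    · have h : cdTwist (2*a+1) 0 = cdTwist 0 a := by simpa using cd_oe a 0
      rw [ha, h, cd_zero_left]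

lemma cd_diag : ∀ p, p ≠ 0 → cdTwist p p = -1 := by
  intro p
  induction p using Nat.strong_induction_on with
  | _ p ih =>
    intro hp
    obtain ⟨a, ha | ha⟩ : ∃ a, p = 2*a ∨ p = 2*a+1 := ⟨p/2, by omega⟩
    · rw [ha, cd_ee]; exact ih a (by omega) (by omega)
    · rw [ha, cd_oo]
      by_cases ha0 : a = 0
      · simp [ha0]
      · simp [ha0]; exact ih a (by omega) ha0

lemma cd_antisym : ∀ n p q : ℕ, p + q ≤ n → p ≠ 0 → q ≠ 0 → p ≠ q →
    cdTwist p q = -cdTwist q p := by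
  intro n
  induction n using Nat.strong_induction_on with
  | _ n ih =>
    intro p q hpq hp hq hne
    obtain ⟨a, ha⟩ : ∃ a, p = 2*a ∨ p = 2*a+1 := ⟨p/2, by omega⟩
    obtain ⟨b, hb⟩ : ∃ b, q = 2*b ∨ q = 2*b+1 := ⟨q/2, by omega⟩
    rcases ha with rfl | rfl <;> rcases hb with rfl | rfl
    · rw [cd_ee, cd_ee]
      exact ih (a+b) (by omega) a b le_rfl (by omega) (by omega) (by omega)
    · have ha0 : a ≠ 0 := by omega
      rw [cd_eo, cd_oe]
      simp [ha0]
    · have hb0 : b ≠ 0 := by omega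
      rw [cd_oe, cd_eo]
      simp [hb0]
    · have hab : a ≠ b := by omega
      rw [cd_oo, cd_oo]
      by_cases ha0 : a = 0
      · have hb0 : b ≠ 0 := by omega
        simp [ha0, hb0, cd_zero_left]
      · by_cases hb0 : b = 0
        · simp [ha0, hb0, cd_zero_left]
        · simp [ha0, hb0]
          have := ih (a+b) (by omega) a b le_rfl ha0 hb0 hab
          linarith

lemma cd_key : ∀ n p q : ℕ, p + q ≤ n →
    (q ≠ 0 → cdTwist (p ^^^ q) q = -cdTwist p q) ∧
    (p ≠ 0 → cdTwist p (p ^^^ q) = -cdTwist p q) := by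
  intro n
  induction n using Nat.strong_induction_on with
  | _ n ih =>
    intro p q hpq
    obtain ⟨a, ha⟩ : ∃ a, p = 2*a ∨ p = 2*a+1 := ⟨p/2, by omega⟩
    obtain ⟨b, hb⟩ : ∃ b, q = 2*b ∨ q = 2*b+1 := ⟨q/2, by omega⟩
    rcases ha with rfl | rfl <;> rcases hb with rfl | rfl
    · constructor
      · intro hq
        have hb0 : b ≠ 0 := by omega
        rw [xor_ee, cd_ee, cd_ee]
        exact (ih (a+b) (by omega) a b le_rfl).1 hb0
      · intro hp
        have ha0 : a ≠ 0 := by omega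
        rw [xor_ee, cd_ee, cd_ee]
        exact (ih (a+b) (by omega) a b le_rfl).2 ha0
    · constructor
      · intro _
        rw [xor_eo, cd_oo, cd_eo]
        by_cases ha0 : a = 0
        · subst ha0
          simp only [Nat.zero_xor, if_true]
          by_cases hb0 : b = 0
          · simp [hb0]
          · simp [hb0, cd_diag b hb0]
        · by_cases hab : a ^^^ b = 0
          · have : a = b := Nat.xor_eq_zero_iff.mp hab
            subst this
            simp [ha0, hab, cd_diag a ha0]
          · simp only [ha0, hab, if_false, neg_neg]
            by_cases hb0 : b = 0
            · subst hb0
              simp [Nat.xor_zero, cd_zero_left, cd_zero_right]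
            · have h1 := (ih (a+b) (by omega) b a (by omega)).2 hb0
              have h2 := cd_antisym (a+b) b a (by omega) hb0 ha0
                (fun h => hab (by simp [h]))
              rw [Nat.xor_comm a b, h1, h2]
              ring
      · intro hp
        have ha0 : a ≠ 0 := by omega
        rw [xor_eo, cd_eo, cd_eo]
        simp only [ha0, if_false]
        have := (ih (a+b) (by omega) a b le_rfl).2 ha0
        linarith
    · constructor
      · intro hq
        have hb0 : b ≠ 0 := by omega
        rw [xor_oe, cd_oe, cd_oe, Nat.xor_comm a b]
        exact (ih (a+b) (by omega) b a (by omega)).2 hb0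
      · intro _
        rw [xor_oe, cd_oo, cd_oe]
        by_cases ha0 : a = 0
        · simp [ha0, cd_zero_right]
        · simp only [ha0, if_false]
          rw [Nat.xor_comm a b]
          exact (ih (a+b) (by omega) b a (by omega)).1 ha0
    · constructor
      · intro _
        rw [xor_oo, cd_eo, cd_oo]
        by_cases ha0 : a = 0
        · subst ha0
          simp only [Nat.zero_xor, if_true, neg_neg]
          by_cases hb0 : b = 0
          · simp [hb0]
          · simp [hb0, cd_diag b hb0]
        · by_cases hab : a ^^^ b = 0
          · have : a = b := Nat.xor_eq_zero_iff.mp hab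
            subst this
            simp [ha0, hab, cd_diag a ha0]
          · simp only [ha0, hab, if_false]
            by_cases hb0 : b = 0
            · subst hb0
              simp [Nat.xor_zero, cd_zero_left, cd_zero_right]
            · have h1 := (ih (a+b) (by omega) a b le_rfl).1 hb0
              have h2 := cd_antisym (a+b) a b (by omega) ha0 hb0
                (fun h => hab (by simp [h]))
              rw [h1, h2]; ring
      · intro _
        rw [xor_oo, cd_oe, cd_oo]
        by_cases ha0 : a = 0
        · simp [ha0, cd_zero_right]
        · simp only [ha0, if_false]
          rw [Nat.xor_comm a b]
          exact (ih (a+b) (by omega) b a (by omega)).1 ha0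

/-- The Cayley-Dickson twist is proper with respect to bitwise XOR on ℕ. -/
theorem cdTwist_proper :
    ∀ p q : ℕ,
      cdTwist p q * cdTwist q q = cdTwist (p ^^^ q) q ∧
      cdTwist p p * cdTwist p q = cdTwist p (p ^^^ q) := by
  intro p q
  constructor
  · by_cases hq : q = 0
    · subst hq
      simp [cd_zero_right, show cdTwist 0 0 = 1 from by simp [cdTwist]]
    · rw [cd_diag q hq, ((cd_key (p+q) p q le_rfl).1 hq)]
      ring
  · by_cases hp : p = 0
    · subst hp
      simp [cd_zero_left, show cdTwist 0 0 = 1 from by simp [cdTwist]]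
    · rw [cd_diag p hp, ((cd_key (p+q) p q le_rfl).2 hp)]
      ring
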